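/- arXiv:1407.5703 — 3 statements merged into one kernel-verified Lean document; each statement's English description precedes it below -/
import Mathlib

section
/- For complex numbers $w_1,w_2,x_1,x_2$, one has $|x_1w_2 - w_1x_2|^2 \leq |w_1^2-x_1^2|^2 + |w_2^2-x_2^2|^2 + |w_1w_2-x_1x_2|^2$. -/
theorem stmt0 (w₁ w₂ x₁ x₂ : ℂ) :
    ‖x₁ * w₂ - w₁ * x₂‖ ^ 2 ≤
      ‖w₁ ^ 2 - x₁ ^ 2‖ ^ 2 + ‖w₂ ^ 2 - x₂ ^ 2‖ ^ 2 +
        ‖w₁ * w₂ - x₁ * x₂‖ ^ 2 := by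
  have key : (x₁ * w₂ - w₁ * x₂) ^ 2 =
      (w₁ * w₂ - x₁ * x₂) ^ 2 - (w₁ ^ 2 - x₁ ^ 2) * (w₂ ^ 2 - x₂ ^ 2) := by ring
  set a := ‖w₁ ^ 2 - x₁ ^ 2‖
  set b := ‖w₂ ^ 2 - x₂ ^ 2‖
  set c := ‖w₁ * w₂ - x₁ * x₂‖
  have h1 : ‖x₁ * w₂ - w₁ * x₂‖ ^ 2 ≤ c ^ 2 + a * b := by
    calc ‖x₁ * w₂ - w₁ * x₂‖ ^ 2
        = ‖(x₁ * w₂ - w₁ * x₂) ^ 2‖ := by rw [norm_pow]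
      _ = ‖(w₁ * w₂ - x₁ * x₂) ^ 2 - (w₁ ^ 2 - x₁ ^ 2) * (w₂ ^ 2 - x₂ ^ 2)‖ := by
          rw [key]
      _ ≤ ‖(w₁ * w₂ - x₁ * x₂) ^ 2‖ +
            ‖(w₁ ^ 2 - x₁ ^ 2) * (w₂ ^ 2 - x₂ ^ 2)‖ :=
          norm_sub_le _ _
      _ = c ^ 2 + a * b := by rw [norm_pow, norm_mul]
  have h2 : a * b ≤ a ^ 2 + b ^ 2 := by nlinarith [sq_nonneg (a - b), sq_nonneg (a + b)]
  linarith
end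

section
/- Let $w=(w_1,w_2), x=(x_1,x_2)\in\mathbb{C}^2$ and set $\alpha^2 = |w_1^2-x_1^2|^2 + |w_2^2-x_2^2|^2 + |w_1w_2-x_1x_2|^2$, $\beta_-^2 = |w_1-x_1|^2+|w_2-x_2|^2$, $\beta_+^2 = |w_1+x_1|^2+|w_2+x_2|^2$. Then $\alpha^2 \leq \beta_+^2\beta_-^2 \leq 4\alpha^2$. -/
theorem stmt1 (w₁ w₂ x₁ x₂ : ℂ) :
    ‖w₁ ^ 2 - x₁ ^ 2‖ ^ 2 + ‖w₂ ^ 2 - x₂ ^ 2‖ ^ 2 +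
        ‖w₁ * w₂ - x₁ * x₂‖ ^ 2 ≤
      (‖w₁ + x₁‖ ^ 2 + ‖w₂ + x₂‖ ^ 2) *
        (‖w₁ - x₁‖ ^ 2 + ‖w₂ - x₂‖ ^ 2) ∧
    (‖w₁ + x₁‖ ^ 2 + ‖w₂ + x₂‖ ^ 2) *
        (‖w₁ - x₁‖ ^ 2 + ‖w₂ - x₂‖ ^ 2) ≤
      4 * (‖w₁ ^ 2 - x₁ ^ 2‖ ^ 2 + ‖w₂ ^ 2 - x₂ ^ 2‖ ^ 2 +
        ‖w₁ * w₂ - x₁ * x₂‖ ^ 2) := by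
  set a := w₁ + x₁ with ha
  set b := w₂ + x₂ with hb
  set c := w₁ - x₁ with hc
  set d := w₂ - x₂ with hd
  have h1 : w₁ ^ 2 - x₁ ^ 2 = a * c := by rw [ha, hc]; ring
  have h2 : w₂ ^ 2 - x₂ ^ 2 = b * d := by rw [hb, hd]; ring
  have h3 : 2 * (w₁ * w₂ - x₁ * x₂) = a * d + b * c := by rw [ha, hb, hc, hd]; ring
  set A := ‖a‖
  set B := ‖b‖
  set C := ‖c‖
  set D := ‖d‖
  have hA : 0 ≤ A := norm_nonneg _
  have hB : 0 ≤ B := norm_nonneg _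
  have hC : 0 ≤ C := norm_nonneg _
  have hD : 0 ≤ D := norm_nonneg _
  have e1 : ‖w₁ ^ 2 - x₁ ^ 2‖ = A * C := by rw [h1, norm_mul]
  have e2 : ‖w₂ ^ 2 - x₂ ^ 2‖ = B * D := by rw [h2, norm_mul]
  have e3 : 2 * ‖w₁ * w₂ - x₁ * x₂‖ = ‖a * d + b * c‖ := by
    rw [← h3, norm_mul]; simp
  have hup : ‖a * d + b * c‖ ≤ A * D + B * C := by
    calc ‖a * d + b * c‖ ≤ ‖a * d‖ + ‖b * c‖ :=
          norm_add_le _ _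
      _ = A * D + B * C := by rw [norm_mul, norm_mul]
  have hlo : A * D - B * C ≤ ‖a * d + b * c‖ := by
    have := abs_norm_sub_norm_le (a * d) (-(b * c))
    simp only [norm_mul, norm_neg, sub_neg_eq_add] at this
    calc A * D - B * C ≤ |A * D - B * C| := le_abs_self _
      _ ≤ _ := this
  have habs : 0 ≤ ‖a * d + b * c‖ := norm_nonneg _
  have h4 : ‖w₁ * w₂ - x₁ * x₂‖ ^ 2 =
      ‖a * d + b * c‖ ^ 2 / 4 := by
    have : (2 * ‖w₁ * w₂ - x₁ * x₂‖) ^ 2 =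
        ‖a * d + b * c‖ ^ 2 := by rw [e3]
    nlinarith [this]
  constructor
  · rw [e1, e2, h4]
    nlinarith [sq_nonneg (A * D - B * C), sq_nonneg (‖a * d + b * c‖),
      mul_nonneg (mul_nonneg hA hD) (mul_nonneg hB hC), hup,
      mul_self_nonneg (A * D + B * C)]
  · rw [e1, e2, h4]
    rcases le_or_gt (B * C) (A * D) with h | h
    · nlinarith [hlo, sq_nonneg (A * C - B * D), mul_nonneg (mul_nonneg hA hD) (mul_nonneg hB hC)]
    · have hlo2 : B * C - A * D ≤ ‖a * d + b * c‖ := by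
        have := abs_norm_sub_norm_le (b * c) (-(a * d))
        simp only [norm_mul, norm_neg, sub_neg_eq_add] at this
        have h2 : ‖b * c + a * d‖ = ‖a * d + b * c‖ := by ring_nf
        calc B * C - A * D ≤ |B * C - A * D| := le_abs_self _
          _ ≤ ‖b * c + a * d‖ := this
          _ = _ := h2
      nlinarith [hlo2, sq_nonneg (A * C - B * D), mul_nonneg (mul_nonneg hA hD) (mul_nonneg hB hC)]
end

section
/- Let $\tilde{D}, \tilde{D}' \subset\subset \mathbb{C}^2$ be bounded domains, $g \in L^\infty(\tilde{D}' \times \tilde{D})$, and let $f(w,x)$ be one of $x_1^2, x_1x_2, x_2^2$. Let $\alpha(w,x)^2 = |w_1^2-x_1^2|^2 + |w_2^2-x_2^2|^2 + |w_1w_2-x_1x_2|^2$. Suppose $\varphi$ is measurable on $\tilde{D}'$ with $\|w\|^{-2}\varphi \in L^\infty(\tilde{D}')$. Then the function $\mathcal{K}\varphi(x) = \int_{\tilde{D}'} \frac{g(w,x) f(w,x) \varphi(w)}{\alpha(w,x)^3}\, dV(w)$ is continuous at $x = 0$ with $\mathcal{K}\varphi(0) = 0$. -/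
open MeasureTheory
noncomputable instance (n : ℕ) : MeasurableSpace (EuclideanSpace ℂ (Fin n)) := borel _
instance (n : ℕ) : BorelSpace (EuclideanSpace ℂ (Fin n)) := ⟨rfl⟩
noncomputable instance (n : ℕ) : InnerProductSpace ℝ (EuclideanSpace ℂ (Fin n)) :=
  InnerProductSpace.rclikeToReal ℂ _
local notation "E2" => EuclideanSpace ℂ (Fin 2)


lemma frank4 : Module.finrank ℝ (EuclideanSpace ℂ (Fin 2)) = 4 := by
  have := Module.finrank_mul_finrank ℝ ℂ (EuclideanSpace ℂ (Fin 2))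
  rw [finrank_euclideanSpace_fin, Complex.finrank_real_complex] at this
  omega

lemma sing_finite {r : ℝ} (hr : 0 < r) :
    ∫⁻ u in Metric.closedBall (0:E2) r, ENNReal.ofReal (1/‖u‖^3) < ⊤ := by
  set V := volume (Metric.ball (0:E2) 1) with hV
  have hVlt : V ≠ ⊤ := measure_ball_lt_top.ne
  set A : ℕ → Set (EuclideanSpace ℂ (Fin 2)) := fun k =>
    Metric.closedBall 0 (r * 2⁻¹ ^ k) \ Metric.closedBall 0 (r * 2⁻¹ ^ (k+1)) with hA
  have hcover : Metric.closedBall (0:E2) r ⊆ {0} ∪ ⋃ k, A k := by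
    intro u hu
    rcases eq_or_ne u 0 with h0 | h0
    · exact Or.inl h0
    have hn : 0 < ‖u‖ := norm_pos_iff.2 h0
    have hex : ∃ k : ℕ, r * 2⁻¹ ^ (k+1) < ‖u‖ := by
      obtain ⟨n, hn2⟩ := exists_pow_lt_of_lt_one (div_pos hn hr) (by norm_num : (2:ℝ)⁻¹ < 1)
      refine ⟨n, ?_⟩
      have h1 : (2:ℝ)⁻¹ ^ (n+1) ≤ 2⁻¹ ^ n :=
        pow_le_pow_of_le_one (by norm_num) (by norm_num) (Nat.le_succ n)
      have h2 : (2:ℝ)⁻¹ ^ n * r < ‖u‖ := (lt_div_iff₀ hr).1 hn2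
      nlinarith [pow_pos (by norm_num : (0:ℝ) < 2⁻¹) n]
    refine Or.inr (Set.mem_iUnion.2 ⟨Nat.find hex, ?_, ?_⟩)
    · rw [Metric.mem_closedBall, dist_zero_right]
      rcases Nat.eq_zero_or_pos (Nat.find hex) with h | h
      · rw [h]; simpa using hu
      · obtain ⟨m, hm⟩ := Nat.exists_eq_succ_of_ne_zero h.ne'
        have := Nat.find_min hex (by omega : m < Nat.find hex)
        push_neg at this
        rw [hm]; exact this
    · rw [Metric.mem_closedBall, dist_zero_right, not_le]
      exact Nat.find_spec hex
  have key : ∀ k : ℕ, ∫⁻ u in A k, ENNReal.ofReal (1/‖u‖^3) ≤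
      (ENNReal.ofReal (8*r) * V) * ENNReal.ofReal 2⁻¹ ^ k := by
    intro k
    have hrk : 0 < r * 2⁻¹ ^ (k+1) := by positivity
    have step1 : ∫⁻ u in A k, ENNReal.ofReal (1/‖u‖^3) ≤
        ∫⁻ _ in A k, ENNReal.ofReal (1/(r * 2⁻¹ ^ (k+1))^3) := by
      refine setLIntegral_mono measurable_const fun u hu => ?_
      have h1 : r * 2⁻¹ ^ (k+1) < ‖u‖ := by
        have := hu.2
        rw [Metric.mem_closedBall, dist_zero_right, not_le] at this
        exact this
      exact ENNReal.ofReal_le_ofReal (by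
        apply one_div_le_one_div_of_le (by positivity)
        gcongr)
    have step2 : volume (A k) ≤ ENNReal.ofReal ((r * 2⁻¹ ^ k)^4) * V := by
      refine (measure_mono Set.diff_subset).trans ?_
      rw [hV, ← frank4]
      exact le_of_eq (Measure.addHaar_closedBall _ _ (by positivity))
    calc ∫⁻ u in A k, ENNReal.ofReal (1/‖u‖^3)
        ≤ ENNReal.ofReal (1/(r * 2⁻¹ ^ (k+1))^3) * volume (A k) := by
          rw [← setLIntegral_const]; exact step1
      _ ≤ ENNReal.ofReal (1/(r * 2⁻¹ ^ (k+1))^3) * (ENNReal.ofReal ((r * 2⁻¹ ^ k)^4) * V) := by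
          gcongr
      _ = ENNReal.ofReal (1/(r * 2⁻¹ ^ (k+1))^3 * (r * 2⁻¹ ^ k)^4) * V := by
          rw [ENNReal.ofReal_mul (by positivity), mul_assoc]
      _ = ENNReal.ofReal (8*r * 2⁻¹ ^ k) * V := by
          congr 2
          field_simp
          ring
      _ = (ENNReal.ofReal (8*r) * V) * ENNReal.ofReal 2⁻¹ ^ k := by
          rw [ENNReal.ofReal_mul (by positivity), ENNReal.ofReal_pow (by norm_num)]
          ring
  have main : ∫⁻ u in Metric.closedBall (0:E2) r, ENNReal.ofReal (1/‖u‖^3) ≤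
      (ENNReal.ofReal (8*r) * V) * (1 - ENNReal.ofReal 2⁻¹)⁻¹ := by
    calc ∫⁻ u in Metric.closedBall (0:E2) r, ENNReal.ofReal (1/‖u‖^3)
        ≤ ∫⁻ u in ({0} ∪ ⋃ k, A k : Set E2), ENNReal.ofReal (1/‖u‖^3) :=
          lintegral_mono_set hcover
      _ ≤ (∫⁻ u in ({0} : Set E2), ENNReal.ofReal (1/‖u‖^3)) +
          ∫⁻ u in (⋃ k, A k), ENNReal.ofReal (1/‖u‖^3) := lintegral_union_le _ _ _
      _ ≤ 0 + ∑' k, ∫⁻ u in A k, ENNReal.ofReal (1/‖u‖^3) := by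
          gcongr
          · exact le_of_eq (setLIntegral_measure_zero _ _ (measure_singleton 0))
          · exact lintegral_iUnion_le _ _
      _ ≤ 0 + ∑' k : ℕ, (ENNReal.ofReal (8*r) * V) * ENNReal.ofReal 2⁻¹ ^ k := by
          gcongr with k
          exact key k
      _ = (ENNReal.ofReal (8*r) * V) * (1 - ENNReal.ofReal 2⁻¹)⁻¹ := by
          rw [zero_add, ENNReal.tsum_mul_left, ENNReal.tsum_geometric]
  refine lt_of_le_of_lt main ?_
  refine ENNReal.mul_lt_top (ENNReal.mul_lt_top ENNReal.ofReal_lt_top hVlt.lt_top) ?_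
  refine ENNReal.inv_lt_top.2 ?_
  rw [tsub_pos_iff_lt]
  exact ENNReal.ofReal_lt_one.2 (by norm_num)


lemma transl (x : E2) (r : ℝ) :
    ∫⁻ w in Metric.closedBall x r, ENNReal.ofReal (1/‖w - x‖^3) =
    ∫⁻ u in Metric.closedBall (0:E2) r, ENNReal.ofReal (1/‖u‖^3) := by
  have hmp : MeasurePreserving (fun u : E2 => u + x) volume volume :=
    measurePreserving_add_right volume x
  have hemb : MeasurableEmbedding (fun u : E2 => u + x) :=
    (MeasurableEquiv.addRight x).measurableEmbedding
  have := hmp.setLIntegral_comp_preimage_emb hemb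
    (fun w => ENNReal.ofReal (1/‖w - x‖^3)) (Metric.closedBall x r)
  rw [← this]
  have hpre : (fun u : E2 => u + x) ⁻¹' Metric.closedBall x r = Metric.closedBall 0 r := by
    ext u
    simp [Metric.mem_closedBall, dist_eq_norm]
  rw [hpre]
  congr 1
  ext u
  simp



lemma alg_key (u0 u1 v0 v1 : ℂ) :
    (norm u0^2 + norm u1^2) * (norm v0^2 + norm v1^2) / 4 ≤
    norm (u0*v0)^2 + norm (u1*v1)^2 + norm ((u0*v1+u1*v0)/2)^2 := by
  have hp : norm (u0*v1) ≤ norm (u0*v1+u1*v0) + norm (u1*v0) := by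
    simpa using norm_add_le (u0*v1+u1*v0) (-(u1*v0))
  have hq : norm (u1*v0) ≤ norm (u0*v1+u1*v0) + norm (u0*v1) := by
    simpa [add_comm] using norm_add_le (u0*v1+u1*v0) (-(u0*v1))
  have ht : 0 ≤ norm (u0*v1+u1*v0) := norm_nonneg _
  have ht2 : (norm (u0*v1) - norm (u1*v0))^2 ≤ norm (u0*v1+u1*v0)^2 :=
    sq_le_sq' (by linarith) (by linarith)
  have habs2 : norm ((u0*v1+u1*v0)/2) = norm (u0*v1+u1*v0) / 2 := by
    rw [norm_div]; norm_num
  rw [habs2]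
  simp only [norm_mul] at hp hq ht2 ⊢
  nlinarith [sq_nonneg (norm u0 * norm v0 - norm u1 * norm v1),
    norm_nonneg u0, norm_nonneg u1, norm_nonneg v0, norm_nonneg v1,
    ht2, sq_nonneg (norm (u0*v1) - norm (u1*v0))]

lemma norm_sq_eq (y : E2) : ‖y‖^2 = norm (y 0)^2 + norm (y 1)^2 := by
  rw [EuclideanSpace.norm_eq, Real.sq_sqrt (by positivity), Fin.sum_univ_two]

lemma div_bound (c X n a b : ℝ) (hc : 0 ≤ c) (hX : 0 ≤ X) (hn : 0 ≤ n)
    (ha : 0 < a) (hb : 0 < b) (hXab : 2*X ≤ a + b) (hnab : 2*n ≤ a + b) :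
    c * (X^2 * n^2) / (a*b/2)^3 ≤ 8*c*X*(1/a^3) + 8*c*X*(1/b^3) := by
  have key : ∀ a b : ℝ, 0 < a → 0 < b → a ≤ b → X ≤ b → n ≤ b →
      c * (X^2 * n^2) / (a*b/2)^3 ≤ 8*c*X*(1/a^3) + 8*c*X*(1/b^3) := by
    intro a b ha hb hab hXb hnb
    rw [div_le_iff₀ (by positivity)]
    have e : (8*c*X*(1/a^3) + 8*c*X*(1/b^3))*((a*b/2)^3) = c*X*(a^3+b^3) := by
      field_simp; ring
    rw [e]
    have hn2 : n^2 ≤ b^2 := by nlinarith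
    have h1 : X*n^2 ≤ b^3 := by
      calc X*n^2 ≤ b*n^2 := by nlinarith
        _ ≤ b*b^2 := by nlinarith
        _ = b^3 := by ring
    have h2 : X^2*n^2 ≤ X*b^3 := by
      calc X^2*n^2 = X*(X*n^2) := by ring
        _ ≤ X*b^3 := by nlinarith
    nlinarith [pow_pos ha 3, pow_pos hb 3, mul_nonneg hc hX]
  rcases le_total a b with h | h
  · exact key a b ha hb h (by linarith) (by linarith)
  · have := key b a hb ha h (by linarith) (by linarith)
    calc c * (X^2 * n^2) / (a*b/2)^3 = c * (X^2 * n^2) / (b*a/2)^3 := by ring_nf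
      _ ≤ 8*c*X*(1/b^3) + 8*c*X*(1/a^3) := this
      _ = 8*c*X*(1/a^3) + 8*c*X*(1/b^3) := by ring

lemma pointwise_bound (w x : E2) (num : ℂ) (c : ℝ) (hc : 0 ≤ c)
    (hnum : norm num ≤ c * (‖x‖^2 * ‖w‖^2)) :
    ‖num / ((Real.sqrt (norm ((w 0)^2 - (x 0)^2)^2 + norm ((w 1)^2 - (x 1)^2)^2 +
        norm (w 0 * w 1 - x 0 * x 1)^2) ^ 3 : ℝ) : ℂ)‖ ≤
      8*c*‖x‖*(1/‖w-x‖^3) + 8*c*‖x‖*(1/‖w+x‖^3) := by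
  by_cases hw1 : w = x
  · have h00 : w 0 = x 0 := by rw [hw1]
    have h11 : w 1 = x 1 := by rw [hw1]
    rw [h00, h11]
    simp only [sub_self, map_zero, ne_eq, OfNat.ofNat_ne_zero, not_false_eq_true, zero_pow,
      add_zero, zero_add, Real.sqrt_zero, Complex.ofReal_zero, div_zero, norm_zero]
    positivity
  by_cases hw2 : w = -x
  · have h00 : w 0 = -(x 0) := by rw [hw2]; rfl
    have h11 : w 1 = -(x 1) := by rw [hw2]; rfl
    rw [h00, h11, show ((-(x 0):ℂ))^2 - (x 0)^2 = 0 by ring,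
      show ((-(x 1):ℂ))^2 - (x 1)^2 = 0 by ring,
      show ((-(x 0):ℂ))*(-(x 1)) - x 0 * x 1 = 0 by ring]
    simp only [map_zero, ne_eq, OfNat.ofNat_ne_zero, not_false_eq_true, zero_pow,
      add_zero, zero_add, Real.sqrt_zero, Complex.ofReal_zero, div_zero, norm_zero]
    positivity
  · -- main case
    have ha : 0 < ‖w - x‖ := norm_pos_iff.2 (sub_ne_zero.2 hw1)
    have hb : 0 < ‖w + x‖ := by
      rw [norm_pos_iff]
      intro h
      exact hw2 (eq_neg_of_add_eq_zero_left h)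
    set S : ℝ := norm ((w 0)^2 - (x 0)^2)^2 + norm ((w 1)^2 - (x 1)^2)^2 +
      norm (w 0 * w 1 - x 0 * x 1)^2 with hSdef
    have hS0 : 0 ≤ S := by positivity
    have hkey : ‖w-x‖ * ‖w+x‖ / 2 ≤ Real.sqrt S := by
      have hid1 : (w 0)^2 - (x 0)^2 = (w 0 - x 0) * ((w 0) + x 0) := by ring
      have hid2 : (w 1)^2 - (x 1)^2 = (w 1 - x 1) * ((w 1) + x 1) := by ring
      have hid3 : w 0 * w 1 - x 0 * x 1 =
          ((w 0 - x 0) * (w 1 + x 1) + (w 1 - x 1) * (w 0 + x 0)) / 2 := by ring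
      have hSl : (‖w-x‖ * ‖w+x‖ / 2)^2 ≤ S := by
        have h1 := alg_key (w 0 - x 0) (w 1 - x 1) (w 0 + x 0) (w 1 + x 1)
        have ea : ‖w - x‖^2 = norm (w 0 - x 0)^2 + norm (w 1 - x 1)^2 := by
          rw [norm_sq_eq]; rfl
        have eb : ‖w + x‖^2 = norm (w 0 + x 0)^2 + norm (w 1 + x 1)^2 := by
          rw [norm_sq_eq]; rfl
        rw [hSdef, hid1, hid2, hid3]
        calc (‖w-x‖ * ‖w+x‖ / 2)^2 = ‖w-x‖^2 * ‖w+x‖^2 / 4 := by ring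
          _ = (norm (w 0 - x 0)^2 + norm (w 1 - x 1)^2) *
              (norm (w 0 + x 0)^2 + norm (w 1 + x 1)^2) / 4 := by rw [ea, eb]
          _ ≤ _ := h1
      calc ‖w-x‖ * ‖w+x‖ / 2 = Real.sqrt ((‖w-x‖ * ‖w+x‖ / 2)^2) := by
            rw [Real.sqrt_sq (by positivity)]
        _ ≤ Real.sqrt S := Real.sqrt_le_sqrt hSl
    have hnorm : ‖num / ((Real.sqrt S ^ 3 : ℝ) : ℂ)‖ =
        norm num / Real.sqrt S ^ 3 := by
      rw [norm_div, Complex.norm_real, Real.norm_eq_abs,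
        abs_of_nonneg (by positivity : (0:ℝ) ≤ Real.sqrt S ^ 3)]
    rw [hnorm]
    have hXab : 2*‖x‖ ≤ ‖w-x‖ + ‖w+x‖ := by
      have e : (w+x)-(w-x) = x+x := by abel
      have h1 : ‖x+x‖ ≤ ‖w+x‖ + ‖w-x‖ := by rw [← e]; exact norm_sub_le _ _
      have h2 : ‖x+x‖ = 2*‖x‖ := by rw [← two_smul ℝ x, norm_smul]; simp
      linarith
    have hnab : 2*‖w‖ ≤ ‖w-x‖ + ‖w+x‖ := by
      have e : (w-x)+(w+x) = w+w := by abel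
      have h1 : ‖w+w‖ ≤ ‖w-x‖ + ‖w+x‖ := by rw [← e]; exact norm_add_le _ _
      have h2 : ‖w+w‖ = 2*‖w‖ := by rw [← two_smul ℝ w, norm_smul]; simp
      linarith
    calc norm num / Real.sqrt S ^ 3
        ≤ (c * (‖x‖^2 * ‖w‖^2)) / (‖w-x‖ * ‖w+x‖ / 2)^3 := by
          apply div_le_div₀ (by positivity) hnum (by positivity)
          exact pow_le_pow_left₀ (by positivity) hkey 3
      _ = c * (‖x‖^2 * ‖w‖^2) / (‖w-x‖ * ‖w+x‖ / 2)^3 := by ring_nf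
      _ ≤ 8*c*‖x‖*(1/‖w-x‖^3) + 8*c*‖x‖*(1/‖w+x‖^3) :=
          div_bound c ‖x‖ ‖w‖ ‖w-x‖ ‖w+x‖ hc (norm_nonneg _) (norm_nonneg _) ha hb hXab hnab

theorem stmt18 (D D' : Set (EuclideanSpace ℂ (Fin 2))) (hDo : IsOpen D) (hD'o : IsOpen D')
    (hDb : Bornology.IsBounded D) (hD'b : Bornology.IsBounded D')
    (g : EuclideanSpace ℂ (Fin 2) → EuclideanSpace ℂ (Fin 2) → ℂ)
    (hgm : Measurable fun p : EuclideanSpace ℂ (Fin 2) × EuclideanSpace ℂ (Fin 2) => g p.1 p.2)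
    (Mg : ℝ) (hg : ∀ w x, norm (g w x) ≤ Mg)
    (f : EuclideanSpace ℂ (Fin 2) → EuclideanSpace ℂ (Fin 2) → ℂ)
    (hf : (f = fun _ x => (x 0) ^ 2) ∨ (f = fun _ x => x 0 * x 1) ∨ (f = fun _ x => (x 1) ^ 2))
    (φ : EuclideanSpace ℂ (Fin 2) → ℂ) (hφm : Measurable φ)
    (Mφ : ℝ) (hφ : ∀ w ∈ D', norm (φ w) ≤ Mφ * ‖w‖ ^ 2) :
    ContinuousAt (fun x : EuclideanSpace ℂ (Fin 2) =>
      ∫ w in D', g w x * f w x * φ w /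
        ((Real.sqrt (norm ((w 0) ^ 2 - (x 0) ^ 2) ^ 2 +
            norm ((w 1) ^ 2 - (x 1) ^ 2) ^ 2 +
            norm (w 0 * w 1 - x 0 * x 1) ^ 2) ^ 3 : ℝ) : ℂ)) 0 ∧
    (∫ w in D', g w 0 * f w 0 * φ w /
        ((Real.sqrt (norm ((w 0) ^ 2 - ((0 : EuclideanSpace ℂ (Fin 2)) 0) ^ 2) ^ 2 +
            norm ((w 1) ^ 2 - ((0 : EuclideanSpace ℂ (Fin 2)) 1) ^ 2) ^ 2 +
            norm (w 0 * w 1 - ((0 : EuclideanSpace ℂ (Fin 2)) 0) *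
              ((0 : EuclideanSpace ℂ (Fin 2)) 1)) ^ 2) ^ 3 : ℝ) : ℂ)) = 0 := by
  have hzero0 : (0 : E2) 0 = 0 := rfl
  have hzero1 : (0 : E2) 1 = 0 := rfl
  have hf0 : ∀ w, f w 0 = 0 := by
    rcases hf with h|h|h <;> subst h <;> intro w <;> simp [hzero0, hzero1]
  have h0 : (∫ w in D', g w 0 * f w 0 * φ w /
        ((Real.sqrt (norm ((w 0) ^ 2 - ((0 : EuclideanSpace ℂ (Fin 2)) 0) ^ 2) ^ 2 +
            norm ((w 1) ^ 2 - ((0 : EuclideanSpace ℂ (Fin 2)) 1) ^ 2) ^ 2 +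
            norm (w 0 * w 1 - ((0 : EuclideanSpace ℂ (Fin 2)) 0) *
              ((0 : EuclideanSpace ℂ (Fin 2)) 1)) ^ 2) ^ 3 : ℝ) : ℂ)) = 0 := by
    simp [hf0]
  refine ⟨?_, h0⟩
  set F : EuclideanSpace ℂ (Fin 2) → ℂ := fun x =>
      ∫ w in D', g w x * f w x * φ w /
        ((Real.sqrt (norm ((w 0) ^ 2 - (x 0) ^ 2) ^ 2 +
            norm ((w 1) ^ 2 - (x 1) ^ 2) ^ 2 +
            norm (w 0 * w 1 - x 0 * x 1) ^ 2) ^ 3 : ℝ) : ℂ) with hFdef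
  have hF0 : F 0 = 0 := h0
  obtain ⟨R, hR0, hRsub⟩ := hD'b.subset_closedBall_lt 0 0
  have hMg0 : (0:ℝ) ≤ max Mg 0 := le_max_right _ _
  have hMφ0 : (0:ℝ) ≤ max Mφ 0 := le_max_right _ _
  set c : ℝ := max Mg 0 * max Mφ 0 with hcdef
  have hc0 : 0 ≤ c := mul_nonneg hMg0 hMφ0
  set J : ENNReal := ∫⁻ u in Metric.closedBall (0:E2) (R+1), ENNReal.ofReal (1/‖u‖^3)
    with hJdef
  have hJ : J ≠ ⊤ := (sing_finite (by linarith)).ne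
  set K : ℝ := 8*c*(J+J).toReal with hKdef
  have tail : ∀ y : E2, ‖y‖ ≤ 1 →
      (∫⁻ w in D', ENNReal.ofReal (1/‖w - y‖^3)) ≤ J := by
    intro y hy
    have hsub : D' ⊆ Metric.closedBall y (R+1) := by
      intro w hw
      have h1 : ‖w‖ ≤ R := by
        have := hRsub hw
        rwa [Metric.mem_closedBall, dist_zero_right] at this
      rw [Metric.mem_closedBall, dist_eq_norm]
      calc ‖w - y‖ ≤ ‖w‖ + ‖y‖ := norm_sub_le _ _
        _ ≤ R + 1 := by linarith
    calc (∫⁻ w in D', ENNReal.ofReal (1/‖w - y‖^3))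
        ≤ ∫⁻ w in Metric.closedBall y (R+1), ENNReal.ofReal (1/‖w - y‖^3) :=
          lintegral_mono_set hsub
      _ = J := by rw [transl]
  have hb : ∀ x : E2, ‖x‖ ≤ 1 → ‖F x‖ ≤ K * ‖x‖ := by
    intro x hx
    have hxn : (0:ℝ) ≤ ‖x‖ := norm_nonneg x
    have habs0 : norm (x 0) ≤ ‖x‖ := by
      have h := norm_sq_eq x
      nlinarith [norm_nonneg (x 0), norm_nonneg (x 1), norm_nonneg x,
        sq_nonneg (norm (x 1))]
    have habs1 : norm (x 1) ≤ ‖x‖ := by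
      have h := norm_sq_eq x
      nlinarith [norm_nonneg (x 0), norm_nonneg (x 1), norm_nonneg x,
        sq_nonneg (norm (x 0))]
    have hnum : ∀ w ∈ D', norm (g w x * f w x * φ w) ≤ c * (‖x‖^2 * ‖w‖^2) := by
      intro w hw
      have hg' : norm (g w x) ≤ max Mg 0 := (hg w x).trans (le_max_left _ _)
      have hφ' : norm (φ w) ≤ max Mφ 0 * ‖w‖^2 := by
        refine (hφ w hw).trans ?_
        have : Mφ ≤ max Mφ 0 := le_max_left _ _
        nlinarith [sq_nonneg ‖w‖]
      have hfx : norm (f w x) ≤ ‖x‖^2 := by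
        rcases hf with h|h|h <;> subst h
        · calc norm ((x 0)^2) = norm (x 0)^2 := by rw [norm_pow]
            _ ≤ ‖x‖^2 := by nlinarith [norm_nonneg (x 0)]
        · calc norm (x 0 * x 1) = norm (x 0) * norm (x 1) := norm_mul _ _
            _ ≤ ‖x‖ * ‖x‖ := mul_le_mul habs0 habs1 (norm_nonneg _) hxn
            _ = ‖x‖^2 := (sq ‖x‖).symm
        · calc norm ((x 1)^2) = norm (x 1)^2 := by rw [norm_pow]
            _ ≤ ‖x‖^2 := by nlinarith [norm_nonneg (x 1)]
      calc norm (g w x * f w x * φ w)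
          = norm (g w x) * norm (f w x) * norm (φ w) := by
            rw [norm_mul, norm_mul]
        _ ≤ max Mg 0 * ‖x‖^2 * (max Mφ 0 * ‖w‖^2) := by
            refine mul_le_mul (mul_le_mul hg' hfx (norm_nonneg _) hMg0) hφ'
              (norm_nonneg _) ?_
            exact mul_nonneg hMg0 (sq_nonneg _)
        _ = c * (‖x‖^2 * ‖w‖^2) := by rw [hcdef]; ring
    have hptR : ∀ w ∈ D', ‖g w x * f w x * φ w /
        ((Real.sqrt (norm ((w 0) ^ 2 - (x 0) ^ 2) ^ 2 +
            norm ((w 1) ^ 2 - (x 1) ^ 2) ^ 2 +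
            norm (w 0 * w 1 - x 0 * x 1) ^ 2) ^ 3 : ℝ) : ℂ)‖ ≤
        8*c*‖x‖*(1/‖w-x‖^3) + 8*c*‖x‖*(1/‖w+x‖^3) := fun w hw =>
      pointwise_bound w x _ c hc0 (hnum w hw)
    have hA0 : (0:ℝ) ≤ 8*c*‖x‖ := by positivity
    have mA : Measurable fun w : E2 => ENNReal.ofReal (8*c*‖x‖*(1/‖w - x‖^3)) := by
      refine ENNReal.measurable_ofReal.comp ?_
      exact (measurable_const.div (((measurable_id.sub measurable_const).norm).pow_const 3)).const_mul _
    have mB : Measurable fun w : E2 => ENNReal.ofReal (8*c*‖x‖*(1/‖w + x‖^3)) := by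
      refine ENNReal.measurable_ofReal.comp ?_
      exact (measurable_const.div (((measurable_id.add measurable_const).norm).pow_const 3)).const_mul _
    have key1 : (∫⁻ w in D', ENNReal.ofReal ‖g w x * f w x * φ w /
        ((Real.sqrt (norm ((w 0) ^ 2 - (x 0) ^ 2) ^ 2 +
            norm ((w 1) ^ 2 - (x 1) ^ 2) ^ 2 +
            norm (w 0 * w 1 - x 0 * x 1) ^ 2) ^ 3 : ℝ) : ℂ)‖) ≤
        ENNReal.ofReal (8*c*‖x‖) * J + ENNReal.ofReal (8*c*‖x‖) * J := by
      calc (∫⁻ w in D', ENNReal.ofReal ‖g w x * f w x * φ w /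
            ((Real.sqrt (norm ((w 0) ^ 2 - (x 0) ^ 2) ^ 2 +
                norm ((w 1) ^ 2 - (x 1) ^ 2) ^ 2 +
                norm (w 0 * w 1 - x 0 * x 1) ^ 2) ^ 3 : ℝ) : ℂ)‖)
          ≤ ∫⁻ w in D', (ENNReal.ofReal (8*c*‖x‖*(1/‖w - x‖^3)) +
              ENNReal.ofReal (8*c*‖x‖*(1/‖w + x‖^3))) := by
            refine setLIntegral_mono (mA.add mB) fun w hw => ?_
            refine le_trans (ENNReal.ofReal_le_ofReal (hptR w hw)) ?_
            exact ENNReal.ofReal_add_le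
        _ = (∫⁻ w in D', ENNReal.ofReal (8*c*‖x‖*(1/‖w - x‖^3))) +
            ∫⁻ w in D', ENNReal.ofReal (8*c*‖x‖*(1/‖w + x‖^3)) := lintegral_add_left mA _
        _ ≤ ENNReal.ofReal (8*c*‖x‖) * J + ENNReal.ofReal (8*c*‖x‖) * J := by
            have e1 : (∫⁻ w in D', ENNReal.ofReal (8*c*‖x‖*(1/‖w - x‖^3))) =
                ENNReal.ofReal (8*c*‖x‖) * ∫⁻ w in D', ENNReal.ofReal (1/‖w - x‖^3) := by
              rw [← lintegral_const_mul' _ _ ENNReal.ofReal_ne_top]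
              congr 1
              ext w
              rw [← ENNReal.ofReal_mul hA0]
            have e2 : (∫⁻ w in D', ENNReal.ofReal (8*c*‖x‖*(1/‖w + x‖^3))) =
                ENNReal.ofReal (8*c*‖x‖) * ∫⁻ w in D', ENNReal.ofReal (1/‖w + x‖^3) := by
              rw [← lintegral_const_mul' _ _ ENNReal.ofReal_ne_top]
              congr 1
              ext w
              rw [← ENNReal.ofReal_mul hA0]
            rw [e1, e2]
            gcongr
            · exact tail x hx
            · have := tail (-x) (by simpa using hx)
              simpa [sub_neg_eq_add] using this
    calc ‖F x‖ ≤ (∫⁻ w in D', ENNReal.ofReal ‖g w x * f w x * φ w /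
        ((Real.sqrt (norm ((w 0) ^ 2 - (x 0) ^ 2) ^ 2 +
            norm ((w 1) ^ 2 - (x 1) ^ 2) ^ 2 +
            norm (w 0 * w 1 - x 0 * x 1) ^ 2) ^ 3 : ℝ) : ℂ)‖).toReal :=
          norm_integral_le_lintegral_norm _
      _ ≤ (ENNReal.ofReal (8*c*‖x‖) * J + ENNReal.ofReal (8*c*‖x‖) * J).toReal := by
          refine ENNReal.toReal_mono ?_ key1
          exact ENNReal.add_ne_top.2 ⟨ENNReal.mul_ne_top ENNReal.ofReal_ne_top hJ,
            ENNReal.mul_ne_top ENNReal.ofReal_ne_top hJ⟩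
      _ = K * ‖x‖ := by
          rw [← mul_add, ENNReal.toReal_mul, ENNReal.toReal_ofReal hA0, hKdef]
          ring
  show Filter.Tendsto F (nhds 0) (nhds (F 0))
  rw [hF0]
  apply squeeze_zero_norm'
  · filter_upwards [Metric.closedBall_mem_nhds (0:E2) one_pos] with x hx
    exact hb x (by rwa [Metric.mem_closedBall, dist_zero_right] at hx)
  · simpa using tendsto_norm_zero.const_mul K
end
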